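/- Let M = (L, μ0, Σ, δ) be an MDP. If there exists a (randomized) strategy α such that M with strategy α is weakly synchronizing, then there exists a pure strategy β such that M with strategy β is weakly synchronizing. -/

import Mathlib

open Filter

namespace SyncMDP

/-- A history: an initial state followed by a list of (action, state) steps. -/
structure Hist (L A : Type) where
  start : L
  steps : List (A × L)
deriving DecidableEq

variable {L A : Type}

/-- The last state of a history. -/
def Hist.last (h : Hist L A) : L := h.steps.foldl (fun _ p => p.2) h.start

/-- The length of a history. -/
def Hist.len (h : Hist L A) : ℕ := h.steps.length

/-- Extending a history by one action and one state. -/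
def Hist.extend (h : Hist L A) (a : A) (l : L) : Hist L A := ⟨h.start, h.steps ++ [(a, l)]⟩

/-- A probability distribution on a finite type. -/
def IsDist {S : Type} [Fintype S] (d : S → ℝ) : Prop :=
  (∀ s, 0 ≤ d s) ∧ ∑ s, d s = 1

/-- A probabilistic transition function. -/
def IsTrans [Fintype L] (δ : L → A → L → ℝ) : Prop := ∀ l a, IsDist (δ l a)

/-- A (randomized) strategy assigns a distribution over actions to every history. -/
def IsStrategy [Fintype A] (α : Hist L A → A → ℝ) : Prop :=
  ∀ h : Hist L A, (∀ a, 0 ≤ α h a) ∧ ∑ a, α h a = 1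

/-- A pure strategy plays one action with probability one after every history. -/
def PureStrat (α : Hist L A → A → ℝ) : Prop := ∀ h, ∃ a, α h a = 1

/-- A blind strategy only depends on the length of the history. -/
def BlindStrat (α : Hist L A → A → ℝ) : Prop :=
  ∀ h₁ h₂ : Hist L A, h₁.len = h₂.len → α h₁ = α h₂

/-- A memoryless strategy only depends on the last state of the history. -/
def Memoryless (α : Hist L A → A → ℝ) : Prop :=
  ∀ h₁ h₂ : Hist L A, h₁.last = h₂.last → α h₁ = α h₂

/-- Auxiliary product for the probability of a history: the first argument is the current
state, the second the history (prefix) read so far, the third the remaining steps. -/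
def prAux (δ : L → A → L → ℝ) (α : Hist L A → A → ℝ) : L → Hist L A → List (A × L) → ℝ
  | _, _, [] => 1
  | cur, pre, (a, l) :: rest => α pre a * δ cur a l * prAux δ α l (pre.extend a l) rest

/-- The probability `Pr^α(h)` of a history `h`. -/
def pr (μ0 : L → ℝ) (δ : L → A → L → ℝ) (α : Hist L A → A → ℝ) (h : Hist L A) : ℝ :=
  μ0 h.start * prAux δ α h.start ⟨h.start, []⟩ h.steps

variable (L A) in
/-- The finite set of all histories of length `n`. -/
def hists [Fintype L] [DecidableEq L] [Fintype A] [DecidableEq A] : ℕ → Finset (Hist L A)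
  | 0 => Finset.univ.image fun l : L => ⟨l, []⟩
  | n + 1 => (hists n).biUnion fun h => Finset.univ.image fun p : A × L => h.extend p.1 p.2

variable [Fintype L] [DecidableEq L] [Fintype A] [DecidableEq A]

/-- The outcome `X_n^α` : the distribution over states at step `n` under strategy `α`. -/
noncomputable def outcome (μ0 : L → ℝ) (δ : L → A → L → ℝ) (α : Hist L A → A → ℝ)
    (n : ℕ) (l : L) : ℝ :=
  ∑ h ∈ (hists L A n).filter (fun h => h.last = l), pr μ0 δ α h

/-- The norm `‖X‖ = max_{ℓ ∈ L} X(ℓ)` of a distribution on a (nonempty) finite type. -/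
noncomputable def dnorm (X : L → ℝ) : ℝ := ⨆ l, X l

/-- Strongly synchronizing: `liminf_n ‖X_n^α‖ = 1`. -/
def StronglySync (μ0 : L → ℝ) (δ : L → A → L → ℝ) (α : Hist L A → A → ℝ) : Prop :=
  liminf (fun n => dnorm (outcome μ0 δ α n)) atTop = 1

/-- Weakly synchronizing: `limsup_n ‖X_n^α‖ = 1`. -/
def WeaklySync (μ0 : L → ℝ) (δ : L → A → L → ℝ) (α : Hist L A → A → ℝ) : Prop :=
  limsup (fun n => dnorm (outcome μ0 δ α n)) atTop = 1

open Classical in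
/-- `Post_σ(ℓ)`: the support of `δ(ℓ,σ)`. -/
noncomputable def post (δ : L → A → L → ℝ) (l : L) (a : A) : Finset L :=
  Finset.univ.filter fun l' => 0 < δ l a l'

/-- Transition function of the perfect-information subset construction. -/
noncomputable def deltaP (δ : L → A → L → ℝ) (s : Finset L) (f : L → A) : Finset L :=
  s.biUnion fun l => post δ l (f l)

/-- Transition function of the blind subset construction. -/
noncomputable def deltaB (δ : L → A → L → ℝ) (s : Finset L) (a : A) : Finset L :=
  s.biUnion fun l => post δ l a

open Classical in
/-- The initial cell: the support of `μ0`. -/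
noncomputable def initCell (μ0 : L → ℝ) : Finset L :=
  Finset.univ.filter fun l => 0 < μ0 l

/-- Reachability of a cell from the initial cell in the perfect-information
subset construction. -/
def ReachP (μ0 : L → ℝ) (δ : L → A → L → ℝ) (s : Finset L) : Prop :=
  Relation.ReflTransGen (fun t t' => ∃ f : L → A, deltaP δ t f = t') (initCell μ0) s

/-- Reachability of a cell from the initial cell in the blind subset construction. -/
def ReachB (μ0 : L → ℝ) (δ : L → A → L → ℝ) (s : Finset L) : Prop :=
  Relation.ReflTransGen (fun t t' => ∃ a : A, deltaB δ t a = t') (initCell μ0) s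

/-- Cyclic successor on `Fin d`. -/
def cyc {d : ℕ} (hd : 0 < d) (i : Fin d) : Fin d := ⟨((i : ℕ) + 1) % d, Nat.mod_lt _ hd⟩

/-- A recurrent cyclic set for the cycle `(s, act)` of length `d` of the
perfect-information subset construction. -/
def IsRCSP {d : ℕ} (hd : 0 < d) (δ : L → A → L → ℝ) (s : Fin d → Finset L)
    (act : Fin d → L → A) (g : Fin d → Finset L) : Prop :=
  ∀ i : Fin d, (g i).Nonempty ∧ g i ⊆ s i ∧
    (g i).biUnion (fun l => post δ l (act i l)) = g (cyc hd i)

/-- A minimal recurrent cyclic set (perfect-information). -/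
def IsMinRCSP {d : ℕ} (hd : 0 < d) (δ : L → A → L → ℝ) (s : Fin d → Finset L)
    (act : Fin d → L → A) (g : Fin d → Finset L) : Prop :=
  IsRCSP hd δ s act g ∧
    ∀ g' : Fin d → Finset L, IsRCSP hd δ s act g' → (∀ i, g' i ⊆ g i) → g' = g

/-- A recurrent cyclic set for the cycle `(s, act)` of length `d` of the blind
subset construction. -/
def IsRCSB {d : ℕ} (hd : 0 < d) (δ : L → A → L → ℝ) (s : Fin d → Finset L)
    (act : Fin d → A) (g : Fin d → Finset L) : Prop :=
  ∀ i : Fin d, (g i).Nonempty ∧ g i ⊆ s i ∧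
    (g i).biUnion (fun l => post δ l (act i)) = g (cyc hd i)

/-- A minimal recurrent cyclic set (blind). -/
def IsMinRCSB {d : ℕ} (hd : 0 < d) (δ : L → A → L → ℝ) (s : Fin d → Finset L)
    (act : Fin d → A) (g : Fin d → Finset L) : Prop :=
  IsRCSB hd δ s act g ∧
    ∀ g' : Fin d → Finset L, IsRCSB hd δ s act g' → (∀ i, g' i ⊆ g i) → g' = g


/-! ### Auxiliary development for Statement 7 -/

section Aux
set_option linter.unusedSectionVars false

/-- The pure strategy induced by a choice function. -/
def pureOf (f : Hist L A → A) : Hist L A → A → ℝ := fun h a => if a = f h then 1 else 0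

lemma pureOf_isStrategy (f : Hist L A → A) : IsStrategy (pureOf f) := by
  intro h
  refine ⟨fun a => ?_, ?_⟩
  · unfold pureOf; split <;> norm_num
  · simp [pureOf]

lemma pureOf_pure (f : Hist L A → A) : PureStrat (pureOf f) :=
  fun h => ⟨f h, by simp [pureOf]⟩

lemma Hist.len_extend (h : Hist L A) (a : A) (l : L) : (h.extend a l).len = h.len + 1 := by
  simp [Hist.extend, Hist.len]

lemma mem_hists (n : ℕ) (h : Hist L A) : h ∈ hists L A n ↔ h.len = n := by
  induction n generalizing h with
  | zero =>
    simp only [hists, Finset.mem_image, Finset.mem_univ, true_and]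
    constructor
    · rintro ⟨l, rfl⟩; rfl
    · intro hl
      refine ⟨h.start, ?_⟩
      obtain ⟨s, steps⟩ := h
      simp only [Hist.len, List.length_eq_zero_iff] at hl
      simp [hl]
  | succ n ih =>
    simp only [hists, Finset.mem_biUnion, Finset.mem_image, Finset.mem_univ, true_and]
    constructor
    · rintro ⟨h', hh', ⟨a, l⟩, rfl⟩
      rw [Hist.len_extend, (ih h').1 hh']
    · intro hl
      obtain ⟨s, steps⟩ := h
      rcases List.eq_nil_or_concat steps with rfl | ⟨ys, y, rfl⟩
      · simp [Hist.len] at hl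
      · refine ⟨⟨s, ys⟩, ?_, y, ?_⟩
        · rw [ih]
          simp only [Hist.len, List.concat_eq_append, List.length_append, List.length_cons, List.length_nil] at hl ⊢
          omega
        · simp [Hist.extend, List.concat_eq_append]

end Aux

section Aux2
set_option linter.unusedSectionVars false
variable {L A : Type} [Fintype L] [DecidableEq L] [Fintype A] [DecidableEq A]
variable (δ : L → A → L → ℝ)

lemma prAux_congr (β β' : Hist L A → A → ℝ) (rest : List (A × L)) :
    ∀ (pre : Hist L A) (cur : L),
      (∀ q : Hist L A, q.len < pre.len + rest.length → β q = β' q) →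
      prAux δ β cur pre rest = prAux δ β' cur pre rest := by
  induction rest with
  | nil => intro pre cur _; rfl
  | cons p t ih =>
    intro pre cur hagree
    obtain ⟨a, l⟩ := p
    have h1 : β pre = β' pre := hagree pre (by simp)
    simp only [prAux]
    rw [h1, ih (pre.extend a l) l]
    intro q hq
    apply hagree
    rw [Hist.len_extend] at hq
    simp only [List.length_cons]
    omega

lemma prAux_update_of_lt (β : Hist L A → A → ℝ) (h₀ : Hist L A) (d : A → ℝ)
    (rest : List (A × L)) :
    ∀ (pre : Hist L A) (cur : L), h₀.len < pre.len →
      prAux δ (Function.update β h₀ d) cur pre rest = prAux δ β cur pre rest := by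
  induction rest with
  | nil => intro pre cur _; rfl
  | cons p t ih =>
    intro pre cur hlt
    obtain ⟨a, l⟩ := p
    have hne : pre ≠ h₀ := fun he => by rw [he] at hlt; omega
    simp only [prAux, Function.update_of_ne hne]
    rw [ih (pre.extend a l) l (by rw [Hist.len_extend]; omega)]

lemma prAux_update_sum (β : Hist L A → A → ℝ) (h₀ : Hist L A) (d : A → ℝ)
    (hd : ∑ a, d a = 1) (rest : List (A × L)) :
    ∀ (pre : Hist L A) (cur : L),
      prAux δ (Function.update β h₀ d) cur pre rest
        = ∑ a : A, d a *
            prAux δ (Function.update β h₀ (fun b => if b = a then 1 else 0)) cur pre rest := by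
  induction rest with
  | nil => intro pre cur; simp only [prAux, mul_one]; exact hd.symm
  | cons p t ih =>
    intro pre cur
    obtain ⟨b, l⟩ := p
    by_cases hpre : pre = h₀
    · subst hpre
      have htail : ∀ (e : A → ℝ),
          prAux δ (Function.update β pre e) l (pre.extend b l) t
            = prAux δ β l (pre.extend b l) t := by
        intro e
        exact prAux_update_of_lt δ β pre e t _ l (by rw [Hist.len_extend]; omega)
      simp only [prAux, Function.update_self, htail]
      rw [Finset.sum_eq_single b]
      · simp [mul_comm, mul_assoc, mul_left_comm]
      · intro a _ hab
        simp [Ne.symm hab]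
      · intro hb; exact absurd (Finset.mem_univ b) hb
    · simp only [prAux, Function.update_of_ne hpre]
      rw [ih (pre.extend b l) l, Finset.mul_sum]
      apply Finset.sum_congr rfl
      intro a _
      ring

end Aux2

section Aux3
set_option linter.unusedSectionVars false
variable {L A : Type} [Fintype L] [DecidableEq L] [Fintype A] [DecidableEq A]
variable (μ0 : L → ℝ) (δ : L → A → L → ℝ)

lemma prAux_append (β : Hist L A → A → ℝ) (s t : List (A × L)) :
    ∀ (pre : Hist L A) (cur : L),
      prAux δ β cur pre (s ++ t)
        = prAux δ β cur pre s *
            prAux δ β (s.foldl (fun _ p => p.2) cur) ⟨pre.start, pre.steps ++ s⟩ t := by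
  induction s with
  | nil => intro pre cur; simp [prAux]
  | cons p s ih =>
    intro pre cur
    obtain ⟨a, l⟩ := p
    simp only [List.cons_append, prAux, List.foldl_cons]
    rw [ih (pre.extend a l) l]
    simp [Hist.extend, mul_assoc]

lemma pr_extend (β : Hist L A → A → ℝ) (h : Hist L A) (a : A) (l : L) :
    pr μ0 δ β (h.extend a l) = pr μ0 δ β h * (β h a * δ h.last a l) := by
  unfold pr
  show μ0 h.start * prAux δ β h.start ⟨h.start, []⟩ (h.steps ++ [(a, l)]) = _
  rw [prAux_append]
  simp only [prAux, List.nil_append, mul_one]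
  rw [show (⟨h.start, h.steps⟩ : Hist L A) = h from rfl,
    show h.steps.foldl (fun _ p => p.2) h.start = h.last from rfl]
  ring

lemma prAux_nonneg (β : Hist L A → A → ℝ) (hβ : ∀ h a, 0 ≤ β h a)
    (hδ : IsTrans δ) (rest : List (A × L)) :
    ∀ (pre : Hist L A) (cur : L), 0 ≤ prAux δ β cur pre rest := by
  induction rest with
  | nil => intro pre cur; norm_num [prAux]
  | cons p t ih =>
    intro pre cur
    obtain ⟨a, l⟩ := p
    simp only [prAux]
    exact mul_nonneg (mul_nonneg (hβ _ _) ((hδ cur a).1 l)) (ih _ _)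

lemma pr_nonneg (β : Hist L A → A → ℝ) (hμ0 : IsDist μ0) (hβ : ∀ h a, 0 ≤ β h a)
    (hδ : IsTrans δ) (h : Hist L A) : 0 ≤ pr μ0 δ β h :=
  mul_nonneg (hμ0.1 _) (prAux_nonneg δ β hβ hδ _ _ _)

lemma sum_pr (β : Hist L A → A → ℝ) (hμ0 : IsDist μ0) (hδ : IsTrans δ)
    (hβ : IsStrategy β) (n : ℕ) :
    ∑ h ∈ hists L A n, pr μ0 δ β h = 1 := by
  induction n with
  | zero =>
    rw [show hists L A 0 = Finset.univ.image fun l : L => (⟨l, []⟩ : Hist L A) from rfl]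
    rw [Finset.sum_image (by intro x _ y _ hxy; exact congrArg Hist.start hxy)]
    simpa [pr, prAux] using hμ0.2
  | succ n ih =>
    rw [show hists L A (n+1)
        = (hists L A n).biUnion (fun h => Finset.univ.image fun p : A × L => h.extend p.1 p.2)
        from rfl]
    rw [Finset.sum_biUnion]
    · have key : ∀ h ∈ hists L A n,
          ∑ h' ∈ Finset.univ.image (fun p : A × L => h.extend p.1 p.2), pr μ0 δ β h'
            = pr μ0 δ β h := by
        intro h _
        rw [Finset.sum_image]
        · rw [Finset.sum_congr rfl (fun p _ => pr_extend μ0 δ β h p.1 p.2)]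
          rw [Fintype.sum_prod_type]
          have e1 : ∀ a : A, (∑ l : L, pr μ0 δ β h * (β h a * δ h.last a l))
              = pr μ0 δ β h * β h a := by
            intro a
            simp only [← Finset.mul_sum]
            rw [(hδ h.last a).2, mul_one]
          rw [Finset.sum_congr rfl (fun a _ => e1 a), ← Finset.mul_sum, (hβ h).2, mul_one]
        · intro p _ q _ hpq
          have hst := congrArg Hist.steps hpq
          simp only [Hist.extend] at hst
          have h2 := List.append_inj_right hst rfl
          simp only [List.cons.injEq, and_true] at h2
          exact Prod.ext_iff.mpr ⟨congrArg Prod.fst h2, congrArg Prod.snd h2⟩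
      rw [Finset.sum_congr rfl key]
      exact ih
    · intro h1 hm1 h2 hm2 hne
      simp only [Function.onFun, Finset.disjoint_left]
      intro x hx1 hx2
      simp only [Finset.mem_image, Finset.mem_univ, true_and] at hx1 hx2
      obtain ⟨p, rfl⟩ := hx1
      obtain ⟨q, hq⟩ := hx2
      apply hne
      have hst := congrArg Hist.start hq
      have hs := congrArg Hist.steps hq
      simp only [Hist.extend] at hs hst
      have hsteps := List.append_inj_left' hs rfl
      obtain ⟨s1, t1⟩ := h1
      obtain ⟨s2, t2⟩ := h2
      simp only [Hist.mk.injEq]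
      exact ⟨hst.symm, hsteps.symm⟩

end Aux3

section Aux4
set_option linter.unusedSectionVars false
variable {L A : Type} [Fintype L] [DecidableEq L] [Fintype A] [DecidableEq A]
variable (μ0 : L → ℝ) (δ : L → A → L → ℝ)

lemma outcome_congr (β β' : Hist L A → A → ℝ) (n : ℕ) (l : L)
    (hag : ∀ q : Hist L A, q.len < n → β q = β' q) :
    outcome μ0 δ β n l = outcome μ0 δ β' n l := by
  unfold outcome pr
  refine Finset.sum_congr rfl fun h hm => ?_
  rw [Finset.mem_filter] at hm
  have hlen : h.len = n := (mem_hists _ _).1 hm.1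
  congr 1
  apply prAux_congr
  intro q hq
  apply hag
  simp only [Hist.len, List.length_nil] at hq hlen ⊢
  omega

lemma outcome_update (β : Hist L A → A → ℝ) (h₀ : Hist L A) (d : A → ℝ)
    (hd : ∑ a, d a = 1) (n : ℕ) (l : L) :
    outcome μ0 δ (Function.update β h₀ d) n l
      = ∑ a : A, d a *
          outcome μ0 δ (Function.update β h₀ (fun b => if b = a then 1 else 0)) n l := by
  unfold outcome pr
  have e : ∀ h : Hist L A,
      μ0 h.start * prAux δ (Function.update β h₀ d) h.start ⟨h.start, []⟩ h.steps
        = ∑ a : A, d a * (μ0 h.start *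
            prAux δ (Function.update β h₀ (fun b => if b = a then 1 else 0))
              h.start ⟨h.start, []⟩ h.steps) := by
    intro h
    rw [prAux_update_sum δ β h₀ d hd, Finset.mul_sum]
    exact Finset.sum_congr rfl fun a _ => by ring
  rw [Finset.sum_congr rfl fun h _ => e h, Finset.sum_comm]
  exact Finset.sum_congr rfl fun a _ => by rw [Finset.mul_sum]

lemma outcome_nonneg (β : Hist L A → A → ℝ) (hμ0 : IsDist μ0) (hβ : ∀ h a, 0 ≤ β h a)
    (hδ : IsTrans δ) (n : ℕ) (l : L) : 0 ≤ outcome μ0 δ β n l :=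
  Finset.sum_nonneg fun h _ => pr_nonneg μ0 δ β hμ0 hβ hδ h

lemma outcome_le_one (β : Hist L A → A → ℝ) (hμ0 : IsDist μ0) (hβ : IsStrategy β)
    (hδ : IsTrans δ) (n : ℕ) (l : L) : outcome μ0 δ β n l ≤ 1 := by
  unfold outcome
  rw [← sum_pr μ0 δ β hμ0 hδ hβ n]
  exact Finset.sum_le_sum_of_subset_of_nonneg (Finset.filter_subset _ _)
    fun h hm _ => pr_nonneg μ0 δ β hμ0 (fun h' a => (hβ h').1 a) hδ h

lemma le_dnorm (X : L → ℝ) (l : L) : X l ≤ dnorm X :=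
  le_ciSup (Finite.bddAbove_range X) l

lemma dnorm_le [Nonempty L] (X : L → ℝ) (c : ℝ) (hX : ∀ l, X l ≤ c) : dnorm X ≤ c :=
  ciSup_le hX

end Aux4

section Aux5
set_option linter.unusedSectionVars false
variable {L A : Type} [Fintype L] [DecidableEq L] [Fintype A] [DecidableEq A]

/-- Iterated expectation over the coordinates in a list of histories. -/
def Exp (α : Hist L A → A → ℝ) : List (Hist L A) → ((Hist L A → A) → ℝ) → (Hist L A → A) → ℝ
  | [], φ, f => φ f
  | h :: t, φ, f => ∑ a : A, α h a * Exp α t φ (Function.update f h a)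

variable (α : Hist L A → A → ℝ)

lemma Exp_const (hα : IsStrategy α) (t : List (Hist L A)) (c : ℝ) :
    ∀ f, Exp α t (fun _ => c) f = c := by
  induction t with
  | nil => intro f; rfl
  | cons h t ih =>
    intro f
    simp only [Exp, ih, ← Finset.sum_mul, (hα h).2, one_mul]

lemma Exp_mono (hα : IsStrategy α) (t : List (Hist L A)) (φ ψ : (Hist L A → A) → ℝ)
    (hφψ : ∀ g, φ g ≤ ψ g) : ∀ f, Exp α t φ f ≤ Exp α t ψ f := by
  induction t with
  | nil => intro f; exact hφψ f
  | cons h t ih =>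
    intro f
    exact Finset.sum_le_sum fun a _ =>
      mul_le_mul_of_nonneg_left (ih _) ((hα h).1 a)

lemma Exp_add (t : List (Hist L A)) (φ ψ : (Hist L A → A) → ℝ) :
    ∀ f, Exp α t (fun g => φ g + ψ g) f = Exp α t φ f + Exp α t ψ f := by
  induction t with
  | nil => intro f; rfl
  | cons h t ih =>
    intro f
    simp only [Exp, ih, mul_add, Finset.sum_add_distrib]

lemma Exp_smul (t : List (Hist L A)) (c : ℝ) (φ : (Hist L A → A) → ℝ) :
    ∀ f, Exp α t (fun g => c * φ g) f = c * Exp α t φ f := by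
  induction t with
  | nil => intro f; rfl
  | cons h t ih =>
    intro f
    simp only [Exp, ih, Finset.mul_sum]
    exact Finset.sum_congr rfl fun a _ => by ring

lemma Exp_sum (t : List (Hist L A)) (s : Finset ℕ) (ψ : ℕ → (Hist L A → A) → ℝ) (f : Hist L A → A) :
    Exp α t (fun g => ∑ k ∈ s, ψ k g) f = ∑ k ∈ s, Exp α t (ψ k) f := by
  classical
  induction s using Finset.induction_on with
  | empty =>
    simp only [Finset.sum_empty]
    have := Exp_smul α t 0 (fun _ => (0:ℝ)) f
    simpa using this
  | insert _ _ hk ih =>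
    simp only [Finset.sum_insert hk]
    rw [Exp_add α t _ _ f, ih]

/-- Hybrid strategy: follow `α` on coordinates in `t`, otherwise the pure strategy of `f`. -/
def hyb (t : List (Hist L A)) (f : Hist L A → A) : Hist L A → A → ℝ :=
  fun h => if h ∈ t then α h else (fun a => if a = f h then 1 else 0)

lemma Exp_outcome (μ0 : L → ℝ) (δ : L → A → L → ℝ) (hα : IsStrategy α)
    (t : List (Hist L A)) (n : ℕ) (l : L) :
    ∀ f, Exp α t (fun g => outcome μ0 δ (pureOf g) n l) f
      = outcome μ0 δ (hyb α t f) n l := by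
  induction t with
  | nil =>
    intro f
    have : hyb α [] f = pureOf f := by
      funext q b; simp [hyb, pureOf]
    rw [show Exp α [] (fun g => outcome μ0 δ (pureOf g) n l) f
        = outcome μ0 δ (pureOf f) n l from rfl, this]
  | cons h t ih =>
    intro f
    by_cases hm : h ∈ t
    · have e1 : ∀ a : A, hyb α t (Function.update f h a) = hyb α t f := by
        intro a; funext q b
        simp only [hyb]
        by_cases hq : q ∈ t
        · simp [hq]
        · have hqh : q ≠ h := fun he => hq (he ▸ hm)
          simp [hq, Function.update_of_ne hqh]
      have e2 : hyb α (h :: t) f = hyb α t f := by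
        funext q b
        simp only [hyb, List.mem_cons]
        by_cases hq : q ∈ t
        · simp [hq]
        · have hqh : q ≠ h := fun he => hq (he ▸ hm)
          simp [hq, hqh]
      simp only [Exp, ih, e1, ← Finset.sum_mul, (hα h).2, one_mul, e2]
    · have e1 : ∀ a : A, hyb α t (Function.update f h a)
          = Function.update (hyb α t f) h (fun b => if b = a then 1 else 0) := by
        intro a; funext q
        by_cases hq : q = h
        · subst hq
          rw [Function.update_self]
          simp [hyb, hm]
        · rw [Function.update_of_ne hq]
          simp only [hyb]
          by_cases hqt : q ∈ t
          · simp [hqt]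
          · simp [hqt, Function.update_of_ne hq]
      have e2 : hyb α (h :: t) f = Function.update (hyb α t f) h (α h) := by
        funext q
        by_cases hq : q = h
        · subst hq
          rw [Function.update_self]
          simp [hyb]
        · rw [Function.update_of_ne hq]
          simp [hyb, hq]
      simp only [Exp, ih, e1]
      rw [e2, outcome_update μ0 δ (hyb α t f) h (α h) (hα h).2 n l]

variable (L A) in
/-- The list of all histories of length `< N`. -/
noncomputable def histListUpTo (N : ℕ) : List (Hist L A) :=
  ((Finset.range N).biUnion (hists L A)).toList

lemma mem_histListUpTo (N : ℕ) (q : Hist L A) :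
    q ∈ histListUpTo L A N ↔ q.len < N := by
  simp [histListUpTo, mem_hists]

lemma Exp_outcome_full (μ0 : L → ℝ) (δ : L → A → L → ℝ) (hα : IsStrategy α)
    (N n : ℕ) (hn : n ≤ N) (l : L) (f : Hist L A → A) :
    Exp α (histListUpTo L A N) (fun g => outcome μ0 δ (pureOf g) n l) f
      = outcome μ0 δ α n l := by
  rw [Exp_outcome α μ0 δ hα]
  apply outcome_congr
  intro q hq
  have : q ∈ histListUpTo L A N := (mem_histListUpTo N q).2 (lt_of_lt_of_le hq hn)
  simp [hyb, this]

end Aux5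

section Aux6
set_option linter.unusedSectionVars false
variable {L A : Type} [Fintype L] [DecidableEq L] [Fintype A] [DecidableEq A]

open Classical in
/-- Indicator function of a predicate on choice functions. -/
noncomputable def Ind (P : (Hist L A → A) → Prop) : (Hist L A → A) → ℝ :=
  fun g => if P g then 1 else 0

variable (α : Hist L A → A → ℝ)

lemma Exp_one_sub (hα : IsStrategy α) (t : List (Hist L A)) (φ : (Hist L A → A) → ℝ)
    (f : Hist L A → A) :
    Exp α t (fun g => 1 - φ g) f = 1 - Exp α t φ f := by
  have h1 : (fun g : Hist L A → A => 1 - φ g)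
      = fun g => (fun _ : Hist L A → A => (1:ℝ)) g + (fun g => (-1) * φ g) g := by
    funext g; ring
  rw [h1, Exp_add α t _ _ f, Exp_const α hα t 1 f, Exp_smul α t (-1) φ f]
  ring

lemma exists_of_Exp_pos (hα : IsStrategy α) (t : List (Hist L A))
    (P : (Hist L A → A) → Prop) (f : Hist L A → A)
    (h : 0 < Exp α t (Ind P) f) : ∃ g, P g := by
  by_contra hng
  push_neg at hng
  have he : Ind P = fun _ => (0:ℝ) := funext fun g => by simp [Ind, hng g]
  rw [he, Exp_const α hα t 0 f] at h
  exact lt_irrefl 0 h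

lemma Exp_markov (hα : IsStrategy α) (t : List (Hist L A)) (φ : (Hist L A → A) → ℝ)
    (f : Hist L A → A) (e : ℝ) (he : 0 < e)
    (hφ1 : ∀ g, φ g ≤ 1) (hE : 1 - e^2 ≤ Exp α t φ f) :
    Exp α t (Ind (fun g => ¬ (1 - e < φ g))) f ≤ e := by
  have hpt : ∀ g, Ind (fun g => ¬ (1 - e < φ g)) g ≤ (1/e) * (1 - φ g) := by
    intro g
    simp only [Ind]
    split
    · rename_i hg
      rw [not_lt] at hg
      have : e ≤ 1 - φ g := by linarith
      calc (1:ℝ) = (1/e) * e := by field_simp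
      _ ≤ (1/e) * (1 - φ g) := by
          apply mul_le_mul_of_nonneg_left this
          positivity
    · have : 0 ≤ 1 - φ g := by linarith [hφ1 g]
      positivity
  calc Exp α t (Ind (fun g => ¬ (1 - e < φ g))) f
      ≤ Exp α t (fun g => (1/e) * (1 - φ g)) f := Exp_mono α hα t _ _ hpt f
    _ = (1/e) * (1 - Exp α t φ f) := by
        rw [Exp_smul α t (1/e) (fun g => 1 - φ g) f, Exp_one_sub α hα t φ f]
    _ ≤ (1/e) * (e^2) := by
        apply mul_le_mul_of_nonneg_left (by linarith) (by positivity)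
    _ = e := by field_simp

lemma isClosed_determined [TopologicalSpace A] [DiscreteTopology A] (N : ℕ)
    (P : (Hist L A → A) → Prop)
    (hdet : ∀ f f' : Hist L A → A, (∀ q : Hist L A, q.len < N → f q = f' q) → P f → P f') :
    IsClosed {f : Hist L A → A | P f} := by
  classical
  set HN := (Finset.range N).biUnion (hists L A) with hHN
  let r : (Hist L A → A) → (↥HN → A) := fun f q => f q.1
  have hr : Continuous r := continuous_pi fun q => continuous_apply _
  have himg : IsClosed (r '' {f | P f}) := (Set.toFinite _).isClosed
  have heq : {f : Hist L A → A | P f} = r ⁻¹' (r '' {f | P f}) := by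
    apply Set.Subset.antisymm
    · exact Set.subset_preimage_image r _
    · rintro f ⟨f', hf', hrf⟩
      refine hdet f' f ?_ hf'
      intro q hq
      have hqm : q ∈ HN := by
        simp only [hHN, Finset.mem_biUnion, Finset.mem_range, mem_hists]
        exact ⟨q.len, hq, rfl⟩
      exact congrFun hrf ⟨q, hqm⟩
  rw [heq]
  exact himg.preimage hr

end Aux6

/-- If an MDP has a weakly synchronizing (randomized) strategy,
then it has a weakly synchronizing pure strategy. -/
theorem pure_sufficient_weakly
    (μ0 : L → ℝ) (δ : L → A → L → ℝ)
    (hμ0 : IsDist μ0) (hδ : IsTrans δ)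
    (h : ∃ α : Hist L A → A → ℝ, IsStrategy α ∧ WeaklySync μ0 δ α) :
    ∃ β : Hist L A → A → ℝ, IsStrategy β ∧ PureStrat β ∧ WeaklySync μ0 δ β := by
  classical
  obtain ⟨α, hα, hws⟩ := h
  -- `L` and `A` are nonempty
  have hLne : Nonempty L := by
    by_contra hne
    rw [not_nonempty_iff] at hne
    have h2 := hμ0.2
    rw [Finset.univ_eq_empty, Finset.sum_empty] at h2
    norm_num at h2
  obtain ⟨l0⟩ := hLne
  have hAne : Nonempty A := by
    by_contra hne
    rw [not_nonempty_iff] at hne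
    have h2 := (hα ⟨l0, []⟩).2
    rw [Finset.univ_eq_empty, Finset.sum_empty] at h2
    norm_num at h2
  obtain ⟨a0⟩ := hAne
  haveI : Nonempty L := ⟨l0⟩
  set f0 : Hist L A → A := fun _ => a0 with hf0
  -- the sequence of thresholds
  set ε : ℕ → ℝ := fun k => (1/2 : ℝ)^(k+2) with hε
  have hεpos : ∀ k, 0 < ε k := fun k => by simp only [hε]; positivity
  have hεle : ∀ j k, j ≤ k → ε k ≤ ε j := by
    intro j k hjk
    simp only [hε]
    exact pow_le_pow_of_le_one (by norm_num) (by norm_num) (by omega)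
  have hsumε : ∀ K : ℕ, ∑ k ∈ Finset.range K, ε k ≤ 1/2 := by
    have key : ∀ K : ℕ, ∑ k ∈ Finset.range K, ε k = 1/2 - (1/2)^(K+1) := by
      intro K
      induction K with
      | zero => simp
      | succ K ih =>
        rw [Finset.sum_range_succ, ih]
        simp only [hε]
        ring
    intro K
    rw [key K]
    have : (0:ℝ) ≤ (1/2)^(K+1) := by positivity
    linarith
  -- norms of outcomes
  have hout_nonneg : ∀ (β : Hist L A → A → ℝ), IsStrategy β → ∀ n,
      0 ≤ dnorm (outcome μ0 δ β n) := fun β hβ n =>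
    le_trans (outcome_nonneg μ0 δ β hμ0 (fun h' a => (hβ h').1 a) hδ n l0) (le_dnorm _ l0)
  have hout_le_one : ∀ (β : Hist L A → A → ℝ), IsStrategy β → ∀ n,
      dnorm (outcome μ0 δ β n) ≤ 1 := fun β hβ n =>
    dnorm_le _ 1 (fun l => outcome_le_one μ0 δ β hμ0 hβ hδ n l)
  -- choose good times for the randomized strategy
  have hfreq : ∀ k : ℕ, ∃ n ≥ k, 1 - (ε k)^2 < dnorm (outcome μ0 δ α n) := by
    intro k
    have hcb : Filter.IsCoboundedUnder (· ≤ ·) Filter.atTop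
        (fun n => dnorm (outcome μ0 δ α n)) :=
      Filter.IsCoboundedUnder.of_frequently_ge (a := 0)
        (Filter.Frequently.of_forall (fun n => hout_nonneg α hα n))
    have hlt : 1 - (ε k)^2 < Filter.limsup (fun n => dnorm (outcome μ0 δ α n)) Filter.atTop := by
      rw [hws]
      have := hεpos k
      nlinarith
    exact Filter.frequently_atTop.1 (Filter.frequently_lt_of_lt_limsup hcb hlt) k
  choose nn hnn hnlt using hfreq
  -- the events
  set Ev : ℕ → Set (Hist L A → A) :=
    fun k => {f | 1 - ε k < dnorm (outcome μ0 δ (pureOf f) (nn k))} with hEv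
  letI : TopologicalSpace A := ⊥
  haveI : DiscreteTopology A := ⟨rfl⟩
  have hclosed : ∀ k, IsClosed (Ev k) := by
    intro k
    apply isClosed_determined (nn k)
    intro f f' hag hf
    have hout : outcome μ0 δ (pureOf f) (nn k) = outcome μ0 δ (pureOf f') (nn k) := by
      funext l
      apply outcome_congr
      intro q hq
      funext b
      simp [pureOf, hag q hq]
    show 1 - ε k < dnorm (outcome μ0 δ (pureOf f') (nn k))
    rw [← hout]
    exact hf
  -- each finite intersection of events is nonempty
  have hVne : ∀ K : ℕ, ∃ f, ∀ k ≤ K, f ∈ Ev k := by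
    intro K
    set N := (Finset.range (K+1)).sup nn with hN
    have hnle : ∀ k ≤ K, nn k ≤ N := fun k hk =>
      Finset.le_sup (Finset.mem_range.2 (by omega))
    set t := histListUpTo L A N with ht
    -- Markov bound for each event
    have hmark : ∀ k ≤ K,
        Exp α t (Ind (fun g => ¬ (1 - ε k <
          dnorm (outcome μ0 δ (pureOf g) (nn k))))) f0 ≤ ε k := by
      intro k hk
      apply Exp_markov α hα t _ f0 (ε k) (hεpos k)
      · intro g
        exact hout_le_one (pureOf g) (pureOf_isStrategy g) (nn k)
      · have hEge : ∀ l : L, outcome μ0 δ α (nn k) l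
            ≤ Exp α t (fun g => dnorm (outcome μ0 δ (pureOf g) (nn k))) f0 := by
          intro l
          calc outcome μ0 δ α (nn k) l
              = Exp α t (fun g => outcome μ0 δ (pureOf g) (nn k) l) f0 :=
                (Exp_outcome_full α μ0 δ hα N (nn k) (hnle k hk) l f0).symm
            _ ≤ Exp α t (fun g => dnorm (outcome μ0 δ (pureOf g) (nn k))) f0 :=
                Exp_mono α hα t _ _ (fun g => le_dnorm _ l) f0
        have := dnorm_le (outcome μ0 δ α (nn k))
          (Exp α t (fun g => dnorm (outcome μ0 δ (pureOf g) (nn k))) f0) hEge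
        have h2 := hnlt k
        linarith
    -- union bound
    have hub : 1 - ∑ k ∈ Finset.range (K+1), ε k
        ≤ Exp α t (Ind (fun g => ∀ k ≤ K, 1 - ε k <
            dnorm (outcome μ0 δ (pureOf g) (nn k)))) f0 := by
      have hpt : ∀ g, 1 - (∑ k ∈ Finset.range (K+1),
          Ind (fun g' => ¬ (1 - ε k < dnorm (outcome μ0 δ (pureOf g') (nn k)))) g)
          ≤ Ind (fun g' => ∀ k ≤ K, 1 - ε k <
              dnorm (outcome μ0 δ (pureOf g') (nn k))) g := by
        intro g
        by_cases hg : ∀ k ≤ K, 1 - ε k < dnorm (outcome μ0 δ (pureOf g) (nn k))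
        · have hR : Ind (fun g' => ∀ k ≤ K, 1 - ε k <
              dnorm (outcome μ0 δ (pureOf g') (nn k))) g = 1 := by
            simp only [Ind]
            rw [if_pos hg]
          have hnn0 : 0 ≤ ∑ k ∈ Finset.range (K+1),
              Ind (fun g' => ¬ (1 - ε k < dnorm (outcome μ0 δ (pureOf g') (nn k)))) g :=
            Finset.sum_nonneg fun k _ => by simp only [Ind]; split <;> norm_num
          rw [hR]
          linarith
        · push_neg at hg
          obtain ⟨k, hkK, hkf⟩ := hg
          have h1 : Ind (fun g' => ¬ (1 - ε k <
              dnorm (outcome μ0 δ (pureOf g') (nn k)))) g = 1 := by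
            simp only [Ind]
            rw [if_pos (not_lt.2 hkf)]
          have hsum1 : (1:ℝ) ≤ ∑ j ∈ Finset.range (K+1),
              Ind (fun g' => ¬ (1 - ε j < dnorm (outcome μ0 δ (pureOf g') (nn j)))) g := by
            have hstep := Finset.single_le_sum (f := fun j => Ind (fun g' => ¬ (1 - ε j <
                dnorm (outcome μ0 δ (pureOf g') (nn j)))) g)
              (fun j _ => by simp only [Ind]; split <;> norm_num)
              (Finset.mem_range.2 (show k < K + 1 by omega))
            simpa only [h1] using hstep
          have h0 : Ind (fun g' => ∀ k ≤ K, 1 - ε k <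
              dnorm (outcome μ0 δ (pureOf g') (nn k))) g = 0 := by
            simp only [Ind]
            rw [if_neg (by push_neg; exact ⟨k, hkK, hkf⟩)]
          rw [h0]
          linarith
      calc 1 - ∑ k ∈ Finset.range (K+1), ε k
          ≤ 1 - ∑ k ∈ Finset.range (K+1),
              Exp α t (Ind (fun g => ¬ (1 - ε k <
                dnorm (outcome μ0 δ (pureOf g) (nn k))))) f0 := by
            have : ∑ k ∈ Finset.range (K+1),
                Exp α t (Ind (fun g => ¬ (1 - ε k <
                  dnorm (outcome μ0 δ (pureOf g) (nn k))))) f0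
                ≤ ∑ k ∈ Finset.range (K+1), ε k :=
              Finset.sum_le_sum fun k hk => hmark k (by
                have := Finset.mem_range.1 hk; omega)
            linarith
        _ = Exp α t (fun g => 1 - ∑ k ∈ Finset.range (K+1),
              Ind (fun g' => ¬ (1 - ε k <
                dnorm (outcome μ0 δ (pureOf g') (nn k)))) g) f0 := by
            rw [Exp_one_sub α hα t _ f0, Exp_sum α t (Finset.range (K+1)) _ f0]
        _ ≤ Exp α t (Ind (fun g => ∀ k ≤ K, 1 - ε k <
              dnorm (outcome μ0 δ (pureOf g) (nn k)))) f0 :=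
            Exp_mono α hα t _ _ hpt f0
    have hpos : 0 < Exp α t (Ind (fun g => ∀ k ≤ K, 1 - ε k <
        dnorm (outcome μ0 δ (pureOf g) (nn k)))) f0 := by
      have := hsumε (K+1)
      linarith
    obtain ⟨g, hg⟩ := exists_of_Exp_pos α hα t _ f0 hpos
    exact ⟨g, fun k hk => hg k hk⟩
  -- compactness: a single function in all events
  set V : ℕ → Set (Hist L A → A) := fun K => ⋂ (k : ℕ) (_ : k ≤ K), Ev k with hV
  have hVclosed : ∀ K, IsClosed (V K) :=
    fun K => isClosed_iInter fun k => isClosed_iInter fun _ => hclosed k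
  have hVanti : ∀ K, V (K+1) ⊆ V K := by
    intro K f hf
    simp only [hV, Set.mem_iInter] at hf ⊢
    intro k hk
    exact hf k (by omega)
  have hVnonempty : ∀ K, (V K).Nonempty := by
    intro K
    obtain ⟨f, hf⟩ := hVne K
    exact ⟨f, by simp only [hV, Set.mem_iInter]; exact fun k hk => hf k hk⟩
  have hInter : (⋂ K, V K).Nonempty :=
    IsCompact.nonempty_iInter_of_sequence_nonempty_isCompact_isClosed V hVanti hVnonempty
      ((hVclosed 0).isCompact) hVclosed
  obtain ⟨fstar, hfstar⟩ := hInter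
  have hfs : ∀ k, 1 - ε k < dnorm (outcome μ0 δ (pureOf fstar) (nn k)) := by
    intro k
    have := Set.mem_iInter.1 hfstar k
    simp only [hV, Set.mem_iInter] at this
    exact this k le_rfl
  -- conclusion
  refine ⟨pureOf fstar, pureOf_isStrategy fstar, pureOf_pure fstar, ?_⟩
  have hstrat := pureOf_isStrategy fstar
  unfold WeaklySync
  have hble : Filter.IsBoundedUnder (· ≤ ·) Filter.atTop
      (fun n => dnorm (outcome μ0 δ (pureOf fstar) n)) :=
    Filter.isBoundedUnder_of ⟨1, fun n => hout_le_one _ hstrat n⟩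
  have hcb : Filter.IsCoboundedUnder (· ≤ ·) Filter.atTop
      (fun n => dnorm (outcome μ0 δ (pureOf fstar) n)) :=
    Filter.IsCoboundedUnder.of_frequently_ge (a := 0)
      (Filter.Frequently.of_forall (fun n => hout_nonneg _ hstrat n))
  apply le_antisymm
  · exact Filter.limsup_le_of_le hcb
      (Filter.Eventually.of_forall (fun n => hout_le_one _ hstrat n))
  · have hall : ∀ e : ℝ, 0 < e → 1 - e ≤ Filter.limsup
        (fun n => dnorm (outcome μ0 δ (pureOf fstar) n)) Filter.atTop := by
      intro e he
      obtain ⟨m, hm⟩ := exists_pow_lt_of_lt_one he (by norm_num : (1/2:ℝ) < 1)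
      apply Filter.le_limsup_of_frequently_le ?_ hble
      rw [Filter.frequently_atTop]
      intro b
      refine ⟨nn (max b m), le_trans (le_max_left b m) (hnn _), ?_⟩
      have h1 := hfs (max b m)
      have h2 : ε (max b m) ≤ (1/2)^m := by
        simp only [hε]
        exact pow_le_pow_of_le_one (by norm_num) (by norm_num) (by omega)
      linarith
    by_contra hlt
    push_neg at hlt
    have he : 0 < (1 - Filter.limsup
        (fun n => dnorm (outcome μ0 δ (pureOf fstar) n)) Filter.atTop) / 2 := by linarith
    have := hall _ he
    linarith

end SyncMDP
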